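/- If 𝒬ᵉ := {Q ∈ 𝒬 : Q ∼ ℙ} is nonempty, then the coherent risk measure ρ̂⁰(x) = sup_{Q∈𝒬} E_Q[-x] is relevant, i.e. ρ̂⁰(-z) > 0 for every z ∈ L₊ \ {0}. Moreover sup_{Q∈𝒬} E_Q[x] = sup_{Q∈𝒬ᵉ} E_Q[x] for all x ∈ L. -/

import Mathlib

noncomputable section
open MeasureTheory Filter Topology
open scoped ENNReal

variable {Ω : Type*} [MeasurableSpace Ω]

/-- The Köthe dual of `L`: a.e.-measurable `g` such that `g * x` is integrable for
every `x ∈ L`.  This plays the role of the dual Orlicz space `L†`. -/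
def Kdual (μ : Measure Ω) (L : Set (Ω → ℝ)) : Set (Ω → ℝ) :=
  {g | AEStronglyMeasurable g μ ∧ ∀ x ∈ L, Integrable (fun ω => g ω * x ω) μ}

/-- `𝒬`: densities of probability measures `Q ≪ ℙ` with `dQ/dℙ ∈ L†` and
`E_Q[m] ≤ 0` for all `m ∈ M`. -/
def QSet (μ : Measure Ω) (L M : Set (Ω → ℝ)) : Set (Ω → ℝ) :=
  {g | g ∈ Kdual μ L ∧ 0 ≤ᵐ[μ] g ∧ (∫ ω, g ω ∂μ) = 1 ∧
    ∀ m ∈ M, (∫ ω, g ω * m ω ∂μ) ≤ 0}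

/-- `𝒬ᵉ`: elements of `𝒬` equivalent to `ℙ`, i.e. with a.e. strictly positive density. -/
def QeSet (μ : Measure Ω) (L M : Set (Ω → ℝ)) : Set (Ω → ℝ) :=
  {g | g ∈ QSet μ L M ∧ ∀ᵐ ω ∂μ, 0 < g ω}

/-- The superhedging cost `ρ⁰(x) = inf {c ∈ ℝ : ∃ m ∈ M, c + m + x ≥ 0 a.s.}`. -/
def supCost (μ : Measure Ω) (M : Set (Ω → ℝ)) (x : Ω → ℝ) : EReal :=
  sInf {c : EReal | ∃ r : ℝ, c = (r : EReal) ∧ ∃ m ∈ M, ∀ᵐ ω ∂μ, 0 ≤ r + m ω + x ω}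

/-- `ρ̂⁰(x) = sup_{Q ∈ 𝒬} E_Q[-x]`. -/
def rhoHat (μ : Measure Ω) (L M : Set (Ω → ℝ)) (x : Ω → ℝ) : EReal :=
  ⨆ g ∈ QSet μ L M, (↑(∫ ω, g ω * (-x ω) ∂μ) : EReal)

/-- `ρ` is a convex risk measure on `L`: proper, `(-∞,∞]`-valued, monotone
(w.r.t. the a.s. order), cash-invariant, and convex. -/
def IsCRM (μ : Measure Ω) (L : Set (Ω → ℝ)) (ρ : (Ω → ℝ) → EReal) : Prop :=
  ρ 0 < ⊤ ∧ (∀ x ∈ L, ρ x ≠ ⊥) ∧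
  (∀ x ∈ L, ∀ y ∈ L, x ≤ᵐ[μ] y → ρ y ≤ ρ x) ∧
  (∀ x ∈ L, ∀ c : ℝ, ρ (fun ω => x ω + c) = ρ x - (c : EReal)) ∧
  (∀ x ∈ L, ∀ y ∈ L, ∀ a : ℝ, 0 ≤ a → a ≤ 1 →
    ρ (fun ω => a * x ω + (1 - a) * y ω) ≤ (a : EReal) * ρ x + ((1 - a : ℝ) : EReal) * ρ y)

/-- The Fatou property: `ρ(-xₙ) ↑ ρ(-x_∞)` along a.s. increasing a.s. convergent sequences. -/
def HasFatou (μ : Measure Ω) (L : Set (Ω → ℝ)) (ρ : (Ω → ℝ) → EReal) : Prop :=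
  ∀ (x : ℕ → Ω → ℝ) (x' : Ω → ℝ), (∀ n, x n ∈ L) → x' ∈ L →
    (∀ᵐ ω ∂μ, Monotone (fun n => x n ω) ∧ Tendsto (fun n => x n ω) atTop (nhds (x' ω))) →
    ρ (-x') = ⨆ n, ρ (-(x n))

/-- A good deal valuation: a normalized convex risk measure with the Fatou property
whose values lie within the no-arbitrage pricing bound. -/
def IsGDV (μ : Measure Ω) (L M : Set (Ω → ℝ)) (ρ : (Ω → ℝ) → EReal) : Prop :=
  IsCRM μ L ρ ∧ ρ 0 = 0 ∧ HasFatou μ L ρ ∧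
  ∀ x ∈ L, -supCost μ M x ≤ ρ (-x) ∧ ρ (-x) ≤ supCost μ M (-x)

lemma mix_integral (μ : Measure Ω) (L M : Set (Ω → ℝ)) {g₀ g : Ω → ℝ}
    (hg₀ : g₀ ∈ QSet μ L M) (hg : g ∈ QSet μ L M) (t : ℝ)
    {y : Ω → ℝ} (hy : y ∈ L) :
    ∫ ω, (t * g₀ ω + (1 - t) * g ω) * y ω ∂μ
      = t * ∫ ω, g₀ ω * y ω ∂μ + (1 - t) * ∫ ω, g ω * y ω ∂μ := by
  have heq : (fun ω => (t * g₀ ω + (1 - t) * g ω) * y ω)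
      = fun ω => t * (g₀ ω * y ω) + (1 - t) * (g ω * y ω) := by
    funext ω; ring
  rw [heq, integral_add ((hg₀.1.2 y hy).const_mul t) ((hg.1.2 y hy).const_mul (1 - t)),
    integral_const_mul, integral_const_mul]

lemma mix_mem_Qe (μ : Measure Ω) [IsProbabilityMeasure μ] (L M : Set (Ω → ℝ))
    (hconst : (fun _ : Ω => (1:ℝ)) ∈ L) (hML : M ⊆ L) {g₀ g : Ω → ℝ}
    (hg₀ : g₀ ∈ QeSet μ L M) (hg : g ∈ QSet μ L M) {t : ℝ} (ht0 : 0 < t) (ht1 : t ≤ 1) :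
    (fun ω => t * g₀ ω + (1 - t) * g ω) ∈ QeSet μ L M := by
  obtain ⟨⟨⟨hm₀, hi₀⟩, hnn₀, hone₀, hM₀⟩, hpos₀⟩ := hg₀
  obtain ⟨⟨hm, hi⟩, hnn, hone, hM⟩ := hg
  have ht1' : (0:ℝ) ≤ 1 - t := by linarith
  refine ⟨⟨⟨(hm₀.const_mul t).add (hm.const_mul (1 - t)), ?_⟩, ?_, ?_, ?_⟩, ?_⟩
  · intro y hy
    have heq : (fun ω => (t * g₀ ω + (1 - t) * g ω) * y ω)
        = fun ω => t * (g₀ ω * y ω) + (1 - t) * (g ω * y ω) := by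
      funext ω; ring
    rw [heq]
    exact ((hi₀ y hy).const_mul t).add ((hi y hy).const_mul (1 - t))
  · filter_upwards [hpos₀, hnn] with ω h1 h2
    have : (0:ℝ) ≤ t * g₀ ω + (1 - t) * g ω :=
      add_nonneg (mul_nonneg ht0.le h1.le) (mul_nonneg ht1' h2)
    simpa using this
  · have h1 : ∫ ω, (t * g₀ ω + (1 - t) * g ω) * (1:ℝ) ∂μ
        = t * ∫ ω, g₀ ω * 1 ∂μ + (1 - t) * ∫ ω, g ω * 1 ∂μ :=
      mix_integral μ L M ⟨⟨hm₀, hi₀⟩, hnn₀, hone₀, hM₀⟩ ⟨⟨hm, hi⟩, hnn, hone, hM⟩ t hconst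
    simp only [mul_one] at h1
    rw [h1, hone₀, hone]; ring
  · intro m hmM
    rw [mix_integral μ L M ⟨⟨hm₀, hi₀⟩, hnn₀, hone₀, hM₀⟩ ⟨⟨hm, hi⟩, hnn, hone, hM⟩ t (hML hmM)]
    have := hM₀ m hmM
    have := hM m hmM
    nlinarith
  · filter_upwards [hpos₀, hnn] with ω h1 h2
    have : (0:ℝ) < t * g₀ ω + (1 - t) * g ω :=
      add_pos_of_pos_of_nonneg (mul_pos ht0 h1) (mul_nonneg ht1' h2)
    simpa using this

/-- if `𝒬ᵉ ≠ ∅` then `ρ̂⁰` is relevant, and the supremum over `𝒬`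
coincides with the supremum over `𝒬ᵉ`. -/
theorem stmt_5 (μ : Measure Ω) [IsProbabilityMeasure μ]
    (L : Submodule ℝ (Ω → ℝ)) (hconst : ∀ c : ℝ, (fun _ => c) ∈ L)
    (M : Set (Ω → ℝ)) (hML : M ⊆ (L : Set (Ω → ℝ)))
    (hMconv : Convex ℝ M)
    (hMcone : ∀ m ∈ M, ∀ c : ℝ, 0 ≤ c → c • m ∈ M)
    (hMneg : ∀ x ∈ L, x ≤ᵐ[μ] (0 : Ω → ℝ) → x ∈ M)
    (hQe : (QeSet μ (L : Set (Ω → ℝ)) M).Nonempty) :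
    (∀ z ∈ L, 0 ≤ᵐ[μ] z → ¬ z =ᵐ[μ] (0 : Ω → ℝ) →
      0 < rhoHat μ (L : Set (Ω → ℝ)) M (-z)) ∧
    (∀ x ∈ L,
      (⨆ g ∈ QSet μ (L : Set (Ω → ℝ)) M, (↑(∫ ω, g ω * x ω ∂μ) : EReal)) =
      (⨆ g ∈ QeSet μ (L : Set (Ω → ℝ)) M, (↑(∫ ω, g ω * x ω ∂μ) : EReal))) := by

  obtain ⟨g₀, hg₀e⟩ := hQe
  obtain ⟨hg₀Q, hg₀pos⟩ := hg₀e
  constructor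
  · intro z hz hznn hzne
    have hint : Integrable (fun ω => g₀ ω * z ω) μ := hg₀Q.1.2 z hz
    have hnn : 0 ≤ᵐ[μ] fun ω => g₀ ω * z ω := by
      filter_upwards [hg₀pos, hznn] with ω h1 h2
      exact mul_nonneg h1.le h2
    have hpos : 0 < ∫ ω, g₀ ω * z ω ∂μ := by
      rw [integral_pos_iff_support_of_nonneg_ae hnn hint]
      by_contra h
      push_neg at h
      have h0 : μ (Function.support fun ω => g₀ ω * z ω) = 0 :=
        le_antisymm h zero_le
      have hae : ∀ᵐ ω ∂μ, g₀ ω * z ω = 0 := by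
        rw [ae_iff]
        simpa [Function.support] using h0
      refine hzne ?_
      filter_upwards [hae, hg₀pos] with ω h1 h2
      have := (mul_eq_zero.mp h1).resolve_left h2.ne'
      simpa using this
    have hle : (↑(∫ ω, g₀ ω * z ω ∂μ) : EReal)
        ≤ rhoHat μ (L : Set (Ω → ℝ)) M (-z) := by
      have h := le_iSup₂ (f := fun g (_ : g ∈ QSet μ (L : Set (Ω → ℝ)) M) =>
        (↑(∫ ω, g ω * (-(-z) ω) ∂μ) : EReal)) g₀ hg₀Q
      simpa [rhoHat] using h
    refine lt_of_lt_of_le ?_ hle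
    exact_mod_cast hpos
  · intro x hx
    refine le_antisymm ?_ ?_
    · refine iSup₂_le fun g hg => ?_
      set S := ⨆ g ∈ QeSet μ (L : Set (Ω → ℝ)) M, (↑(∫ ω, g ω * x ω ∂μ) : EReal)
      have h1L : (fun _ : Ω => (1:ℝ)) ∈ L := hconst 1
      set a := ∫ ω, g₀ ω * x ω ∂μ
      set b := ∫ ω, g ω * x ω ∂μ
      have key : ∀ n : ℕ, (↑((1/(n+1:ℝ)) * a + (1 - 1/(n+1:ℝ)) * b) : EReal) ≤ S := by
        intro n
        have ht0 : (0:ℝ) < 1/(n+1:ℝ) := by positivity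
        have ht1 : 1/(n+1:ℝ) ≤ 1 := by
          rw [div_le_one (by positivity)]
          simp
        have hmem := mix_mem_Qe μ (L : Set (Ω → ℝ)) M h1L hML ⟨hg₀Q, hg₀pos⟩ hg ht0 ht1
        have hI := mix_integral μ (L : Set (Ω → ℝ)) M hg₀Q hg (1/(n+1:ℝ)) hx
        calc (↑((1/(n+1:ℝ)) * a + (1 - 1/(n+1:ℝ)) * b) : EReal)
            = ↑(∫ ω, ((1/(n+1:ℝ)) * g₀ ω + (1 - 1/(n+1:ℝ)) * g ω) * x ω ∂μ) := by
              rw [hI]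
          _ ≤ S := le_iSup₂ (f := fun g (_ : g ∈ QeSet μ (L : Set (Ω → ℝ)) M) =>
              (↑(∫ ω, g ω * x ω ∂μ) : EReal)) _ hmem
      have htend : Tendsto (fun n : ℕ => ((1/(n+1:ℝ)) * a + (1 - 1/(n+1:ℝ)) * b)) atTop (nhds b) := by
        have h0 : Tendsto (fun n : ℕ => 1/(n+1:ℝ)) atTop (nhds 0) :=
          tendsto_one_div_add_atTop_nhds_zero_nat
        have ha : Tendsto (fun n : ℕ => (1/(n+1:ℝ)) * a) atTop (nhds (0 * a)) :=
          h0.mul_const a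
        have hb : Tendsto (fun n : ℕ => (1 - 1/(n+1:ℝ)) * b) atTop (nhds ((1 - 0) * b)) :=
          ((tendsto_const_nhds (x := (1:ℝ))).sub h0).mul_const b
        have := ha.add hb
        simpa using this
      have htendE : Tendsto (fun n : ℕ => (↑((1/(n+1:ℝ)) * a + (1 - 1/(n+1:ℝ)) * b) : EReal))
          atTop (nhds (↑b : EReal)) := EReal.tendsto_coe.mpr htend
      exact le_of_tendsto htendE (Eventually.of_forall key)
    · refine iSup₂_le fun g hg => ?_
      exact le_iSup₂ (f := fun g (_ : g ∈ QSet μ (L : Set (Ω → ℝ)) M) =>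
        (↑(∫ ω, g ω * x ω ∂μ) : EReal)) g hg.1
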